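/- The function t ↦ tan t · sin t is convex on the interval [0, π/2). -/
import Mathlib


open Real

theorem convexOn_tan_mul_sin :
    ConvexOn ℝ (Set.Ico 0 (π / 2)) (fun t : ℝ => tan t * sin t) := by
  have hsub : Set.Ico (0:ℝ) (π/2) ⊆ Set.Icc (-(π/2)) (π/2) := fun x hx =>
    ⟨by linarith [hx.1, pi_pos], hx.2.le⟩
  have hconc : ConcaveOn ℝ (Set.Ico 0 (π/2)) cos :=
    strictConcaveOn_cos_Icc.concaveOn.subset hsub (convex_Ico _ _)
  have himgpos : cos '' Set.Ico 0 (π/2) ⊆ Set.Ioi 0 := by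
    rintro _ ⟨x, hx, rfl⟩
    exact cos_pos_of_mem_Ioo ⟨by linarith [hx.1, pi_pos], hx.2⟩
  have himgconv : Convex ℝ (cos '' Set.Ico 0 (π/2)) :=
    (((convex_Ico _ _).isPreconnected.image _ continuous_cos.continuousOn).ordConnected).convex
  have hinv : ConvexOn ℝ (cos '' Set.Ico 0 (π/2)) (fun x : ℝ => x⁻¹) :=
    ((convexOn_zpow (-1)).subset himgpos himgconv).congr (fun x _ => by simp)
  have hanti : AntitoneOn (fun x : ℝ => x⁻¹) (cos '' Set.Ico 0 (π/2)) := fun x hx y hy hxy =>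
    inv_anti₀ (himgpos hx) hxy
  have h1 : ConvexOn ℝ (Set.Ico 0 (π/2)) ((fun x:ℝ => x⁻¹) ∘ cos) :=
    hinv.comp_concaveOn hconc hanti
  have h2 : ConvexOn ℝ (Set.Ico 0 (π/2)) (fun t => -cos t) := hconc.neg
  refine (h1.add h2).congr fun x hx => ?_
  have hc : cos x ≠ 0 :=
    (cos_pos_of_mem_Ioo ⟨by linarith [hx.1, pi_pos], hx.2⟩).ne'
  simp only [Function.comp, Pi.add_apply, tan_eq_sin_div_cos]
  have := sin_sq_add_cos_sq x
  field_simp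
  nlinarith [this]
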